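/- Fix x ∈ X, t ∈ S, and an arbitrary function c : S(x) → ℂ. The linear map defined on finitely supported elements of ℓ²(S(x)) by ξ_y ↦ c(y) ξ_{σ_t(y)} extends to a bounded operator on ℓ²(S(x)) of norm at most 1 if and only if for every y ∈ S(x) one has ∑_{y' ∈ S(x), σ_t(y') = σ_t(y)} |c(y')|² ≤ 1. -/

import Mathlib

open scoped ENNReal

set_option maxHeartbeats 1000000

local notation "⟪" x ", " y "⟫" => @inner ℂ _ _ x y

namespace OrbitShiftAux

theorem two_toReal : ((2 : ℝ≥0∞).toReal) = (2 : ℝ) := by norm_num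

theorem rpow_toReal_eq_sq (a : ℝ) (ha : 0 ≤ a) : a ^ ((2 : ℝ≥0∞).toReal) = a ^ 2 := by
  rw [two_toReal, Real.rpow_two]

theorem memℓp_two_iff {κ : Type} (f : κ → ℂ) :
    Memℓp f 2 ↔ Summable fun i => ‖f i‖ ^ 2 := by
  rw [memℓp_gen_iff (by norm_num : (0:ℝ) < (2 : ℝ≥0∞).toReal)]
  constructor <;> intro h
  · refine h.congr fun i => ?_
    rw [rpow_toReal_eq_sq _ (norm_nonneg _)]
  · refine h.congr fun i => ?_
    rw [rpow_toReal_eq_sq _ (norm_nonneg _)]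

theorem lp_norm_sq {κ : Type} (f : lp (fun _ : κ => ℂ) 2) :
    ‖f‖ ^ 2 = ∑' i, ‖f i‖ ^ 2 := by
  have h := lp.norm_rpow_eq_tsum (p := 2) (by norm_num) f
  rw [rpow_toReal_eq_sq _ (norm_nonneg _)] at h
  rw [h]
  exact tsum_congr fun i => rpow_toReal_eq_sq _ (norm_nonneg _)

theorem le_of_sq_le_sq {a b : ℝ} (ha : 0 ≤ a) (hb : 0 ≤ b) (h : a ^ 2 ≤ b ^ 2) : a ≤ b := by
  nlinarith

variable {ι : Type} [DecidableEq ι]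

section Forward

/-- Forward direction of the auxiliary equivalence. -/
theorem forward (φ : ι → ι) (c : ι → ℂ)
    (T : lp (fun _ : ι => ℂ) 2 →L[ℂ] lp (fun _ : ι => ℂ) 2)
    (hT : ‖T‖ ≤ 1)
    (hTs : ∀ y : ι, T (lp.single 2 y (1 : ℂ)) = c y • lp.single 2 (φ y) (1 : ℂ))
    (z : ι) (F : Finset {y : ι // φ y = z}) :
    ∑ y ∈ F, ‖c (y : ι)‖ ^ 2 ≤ 1 := by
  classical
  set s : Finset ι := F.image Subtype.val with hs
  have hmem : ∀ i ∈ s, φ i = z := by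
    intro i hi
    rcases Finset.mem_image.1 hi with ⟨w, _, rfl⟩
    exact w.2
  set a : ι → ℂ := fun i => (starRingEnd ℂ) (c i) with ha
  set v : lp (fun _ : ι => ℂ) 2 := ∑ i ∈ s, lp.single 2 i (a i) with hv
  set r : ℝ := ∑ i ∈ s, ‖c i‖ ^ 2 with hr
  have hr0 : 0 ≤ r := Finset.sum_nonneg fun i _ => by positivity
  have hvnorm : ‖v‖ ^ 2 = r := by
    have h := lp.norm_sum_single (p := 2) (by norm_num) a s
    rw [rpow_toReal_eq_sq _ (norm_nonneg _)] at h
    rw [hv, h, hr]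
    refine Finset.sum_congr rfl fun i _ => ?_
    rw [rpow_toReal_eq_sq _ (norm_nonneg _)]
    simp [ha]
  have hTv : T v = ((r : ℂ) • lp.single 2 z (1 : ℂ) : lp (fun _ : ι => ℂ) 2) := by
    rw [hv, map_sum]
    have hterm : ∀ i ∈ s, T (lp.single 2 i (a i))
        = (((‖c i‖ : ℂ) ^ 2) • lp.single 2 z (1 : ℂ) : lp (fun _ : ι => ℂ) 2) := by
      intro i hi
      have h1 : (lp.single 2 i (a i) : lp (fun _ : ι => ℂ) 2)
          = a i • lp.single 2 i (1 : ℂ) := by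
        rw [← lp.single_smul]
        simp
      rw [h1, map_smul, hTs i, hmem i hi, smul_smul]
      congr 1
      rw [ha]
      exact RCLike.conj_mul (c i)
    rw [Finset.sum_congr rfl hterm, ← Finset.sum_smul]
    congr 1
    rw [hr]
    push_cast
    rfl
  have hTvnorm : ‖T v‖ = r := by
    rw [hTv, norm_smul, lp.norm_single (E := fun _ : ι => ℂ) (by norm_num : (0:ℝ≥0∞) < 2)
      z (1:ℂ)]
    simp [abs_of_nonneg hr0]
  have hle : r ≤ ‖v‖ := by
    calc r = ‖T v‖ := hTvnorm.symm
      _ ≤ ‖T‖ * ‖v‖ := T.le_opNorm v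
      _ ≤ 1 * ‖v‖ := mul_le_mul_of_nonneg_right hT (norm_nonneg v)
      _ = ‖v‖ := one_mul _
  have hr1 : r ≤ 1 := by nlinarith [norm_nonneg v]
  have hsum : ∑ y ∈ F, ‖c (y : ι)‖ ^ 2 = r := by
    rw [hr, hs, Finset.sum_image (fun x _ y _ h => Subtype.ext h)]
  rw [hsum]; exact hr1

end Forward

section Construction

variable (φ : ι → ι) (c : ι → ℂ)

/-- the conjugated coefficient vector on the fiber over `z`. -/
noncomputable def fiberC
    (hc : ∀ z : ι, ∀ F : Finset {y : ι // φ y = z}, ∑ y ∈ F, ‖c (y : ι)‖ ^ 2 ≤ 1)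
    (z : ι) : lp (fun _ : {y : ι // φ y = z} => ℂ) 2 :=
  ⟨fun y => (starRingEnd ℂ) (c (y : ι)), by
    refine (memℓp_two_iff _).2 ?_
    refine summable_of_sum_le (c := 1) (fun y => by positivity) fun u => ?_
    calc ∑ y ∈ u, ‖(starRingEnd ℂ) (c (y : ι))‖ ^ 2
        = ∑ y ∈ u, ‖c (y : ι)‖ ^ 2 := Finset.sum_congr rfl fun y _ => by simp
      _ ≤ 1 := hc z u⟩

theorem fiberC_norm_le_one
    (hc : ∀ z : ι, ∀ F : Finset {y : ι // φ y = z}, ∑ y ∈ F, ‖c (y : ι)‖ ^ 2 ≤ 1)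
    (z : ι) : ‖fiberC φ c hc z‖ ≤ 1 := by
  have hsummable : Summable fun y : {y : ι // φ y = z} => ‖c (y : ι)‖ ^ 2 :=
    summable_of_sum_le (fun y => by positivity) (hc z)
  refine le_of_sq_le_sq (norm_nonneg _) zero_le_one ?_
  rw [lp_norm_sq]
  have heq : (∑' y : {y : ι // φ y = z}, ‖(fiberC φ c hc z) y‖ ^ 2)
      = ∑' y : {y : ι // φ y = z}, ‖c (y : ι)‖ ^ 2 :=
    tsum_congr fun y => by simp [fiberC]
  rw [heq, one_pow]
  exact Summable.tsum_le_of_sum_le hsummable (hc z)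

/-- the restriction of `f` to the fiber over `z`. -/
noncomputable def fiberR (f : lp (fun _ : ι => ℂ) 2) (z : ι) :
    lp (fun _ : {y : ι // φ y = z} => ℂ) 2 :=
  ⟨fun y => f (y : ι), by
    refine (memℓp_two_iff _).2 ?_
    have h0 : Summable fun i : ι => ‖f i‖ ^ 2 := (memℓp_two_iff ⇑f).1 (lp.memℓp f)
    exact h0.subtype _⟩

theorem fiberR_norm_sq (f : lp (fun _ : ι => ℂ) 2) (z : ι) :
    ‖fiberR φ f z‖ ^ 2 = ∑' y : {y : ι // φ y = z}, ‖f (y : ι)‖ ^ 2 := by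
  rw [lp_norm_sq]
  exact tsum_congr fun y => rfl

theorem sigma_summable (f : lp (fun _ : ι => ℂ) 2) :
    Summable fun p : Σ z : ι, {y : ι // φ y = z} => ‖f ((p.2 : ι))‖ ^ 2 := by
  have h0 : Summable fun i : ι => ‖f i‖ ^ 2 := (memℓp_two_iff ⇑f).1 (lp.memℓp f)
  exact (Equiv.sigmaFiberEquiv φ).summable_iff.2 h0

theorem fiber_summable (f : lp (fun _ : ι => ℂ) 2) :
    Summable fun z : ι => ∑' y : {y : ι // φ y = z}, ‖f (y : ι)‖ ^ 2 :=
  ((summable_sigma_of_nonneg fun p => by positivity).1 (sigma_summable φ f)).2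

theorem fiber_tsum (f : lp (fun _ : ι => ℂ) 2) :
    (∑' z : ι, ∑' y : {y : ι // φ y = z}, ‖f (y : ι)‖ ^ 2) = ‖f‖ ^ 2 := by
  have h0 : Summable fun i : ι => ‖f i‖ ^ 2 := (memℓp_two_iff ⇑f).1 (lp.memℓp f)
  have hsig := sigma_summable φ f
  have h1 : (∑' p : Σ z : ι, {y : ι // φ y = z}, ‖f ((p.2 : ι))‖ ^ 2)
      = ∑' i : ι, ‖f i‖ ^ 2 :=
        (Equiv.sigmaFiberEquiv φ).tsum_eq (fun i : ι => ‖f i‖ ^ 2)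
  have h2 := Summable.tsum_sigma'
    (fun z => ((summable_sigma_of_nonneg fun p => by positivity).1 hsig).1 z) hsig
  calc (∑' z : ι, ∑' y : {y : ι // φ y = z}, ‖f (y : ι)‖ ^ 2)
      = ∑' p : Σ z : ι, {y : ι // φ y = z}, ‖f ((p.2 : ι))‖ ^ 2 := h2.symm
    _ = ∑' i : ι, ‖f i‖ ^ 2 := h1
    _ = ‖f‖ ^ 2 := (lp_norm_sq f).symm

/-- the candidate image function. -/
noncomputable def gfun
    (hc : ∀ z : ι, ∀ F : Finset {y : ι // φ y = z}, ∑ y ∈ F, ‖c (y : ι)‖ ^ 2 ≤ 1)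
    (f : lp (fun _ : ι => ℂ) 2) : ι → ℂ :=
  fun z => ⟪fiberC φ c hc z, fiberR φ f z⟫

theorem gfun_sq_le
    (hc : ∀ z : ι, ∀ F : Finset {y : ι // φ y = z}, ∑ y ∈ F, ‖c (y : ι)‖ ^ 2 ≤ 1)
    (f : lp (fun _ : ι => ℂ) 2) (z : ι) :
    ‖gfun φ c hc f z‖ ^ 2 ≤ ∑' y : {y : ι // φ y = z}, ‖f (y : ι)‖ ^ 2 := by
  rw [← fiberR_norm_sq]
  have h1 : ‖gfun φ c hc f z‖ ≤ ‖fiberC φ c hc z‖ * ‖fiberR φ f z‖ := norm_inner_le_norm _ _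
  have h2 : ‖fiberC φ c hc z‖ * ‖fiberR φ f z‖ ≤ 1 * ‖fiberR φ f z‖ :=
    mul_le_mul_of_nonneg_right (fiberC_norm_le_one φ c hc z) (norm_nonneg _)
  nlinarith [norm_nonneg (gfun φ c hc f z), norm_nonneg (fiberR φ f z)]

theorem gfun_summable
    (hc : ∀ z : ι, ∀ F : Finset {y : ι // φ y = z}, ∑ y ∈ F, ‖c (y : ι)‖ ^ 2 ≤ 1)
    (f : lp (fun _ : ι => ℂ) 2) :
    Summable fun z : ι => ‖gfun φ c hc f z‖ ^ 2 :=
  Summable.of_nonneg_of_le (fun z => by positivity) (gfun_sq_le φ c hc f) (fiber_summable φ f)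

theorem gfun_memℓp
    (hc : ∀ z : ι, ∀ F : Finset {y : ι // φ y = z}, ∑ y ∈ F, ‖c (y : ι)‖ ^ 2 ≤ 1)
    (f : lp (fun _ : ι => ℂ) 2) : Memℓp (gfun φ c hc f) 2 :=
  (memℓp_two_iff _).2 (gfun_summable φ c hc f)

theorem gfun_norm_le
    (hc : ∀ z : ι, ∀ F : Finset {y : ι // φ y = z}, ∑ y ∈ F, ‖c (y : ι)‖ ^ 2 ≤ 1)
    (f : lp (fun _ : ι => ℂ) 2) :
    ‖(⟨gfun φ c hc f, gfun_memℓp φ c hc f⟩ : lp (fun _ : ι => ℂ) 2)‖ ≤ ‖f‖ := by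
  refine le_of_sq_le_sq (norm_nonneg _) (norm_nonneg _) ?_
  rw [lp_norm_sq]
  calc (∑' z : ι, ‖gfun φ c hc f z‖ ^ 2)
      ≤ ∑' z : ι, ∑' y : {y : ι // φ y = z}, ‖f (y : ι)‖ ^ 2 :=
        Summable.tsum_le_tsum (gfun_sq_le φ c hc f) (gfun_summable φ c hc f) (fiber_summable φ f)
    _ = ‖f‖ ^ 2 := fiber_tsum φ f

theorem gfun_add
    (hc : ∀ z : ι, ∀ F : Finset {y : ι // φ y = z}, ∑ y ∈ F, ‖c (y : ι)‖ ^ 2 ≤ 1)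
    (f f' : lp (fun _ : ι => ℂ) 2) (z : ι) :
    gfun φ c hc (f + f') z = gfun φ c hc f z + gfun φ c hc f' z := by
  have hR : fiberR φ (f + f') z = fiberR φ f z + fiberR φ f' z := by
    apply Subtype.ext
    funext y
    show (f + f') (y : ι) = f (y : ι) + f' (y : ι)
    rw [lp.coeFn_add]
    rfl
  unfold gfun
  rw [hR, inner_add_right]

theorem gfun_smul
    (hc : ∀ z : ι, ∀ F : Finset {y : ι // φ y = z}, ∑ y ∈ F, ‖c (y : ι)‖ ^ 2 ≤ 1)
    (r : ℂ) (f : lp (fun _ : ι => ℂ) 2) (z : ι) :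
    gfun φ c hc (r • f) z = r * gfun φ c hc f z := by
  have hR : fiberR φ (r • f) z = r • fiberR φ f z := by
    apply Subtype.ext
    funext y
    show (r • f) (y : ι) = r • f (y : ι)
    rw [lp.coeFn_smul]
    rfl
  unfold gfun
  rw [hR, inner_smul_right]

theorem gfun_single
    (hc : ∀ z : ι, ∀ F : Finset {y : ι // φ y = z}, ∑ y ∈ F, ‖c (y : ι)‖ ^ 2 ≤ 1)
    (y z : ι) :
    gfun φ c hc (lp.single 2 y (1 : ℂ)) z = if z = φ y then c y else 0 := by
  unfold gfun
  rw [lp.inner_eq_tsum]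
  have hterm : ∀ w : {y' : ι // φ y' = z},
      ⟪(fiberC φ c hc z) w, (fiberR φ (lp.single 2 y (1 : ℂ)) z) w⟫
        = c (w : ι) * (if (w : ι) = y then 1 else 0) := by
    intro w
    have h1 : (fiberC φ c hc z) w = (starRingEnd ℂ) (c (w : ι)) := rfl
    have h2 : (fiberR φ (lp.single 2 y (1 : ℂ)) z) w
        = (lp.single 2 y (1 : ℂ) : lp (fun _ : ι => ℂ) 2) (w : ι) := rfl
    rw [h1, h2, RCLike.inner_apply]
    by_cases h : (w : ι) = y
    · subst h
      simp [lp.single_apply_self]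
    · simp [lp.single_apply_ne 2 y _ h, h]
  rw [tsum_congr hterm]
  by_cases h : z = φ y
  · subst h
    rw [tsum_eq_single (⟨y, rfl⟩ : {y' : ι // φ y' = φ y})]
    · simp
    · intro w hw
      have hwy : (w : ι) ≠ y := fun hh => hw (Subtype.ext hh)
      simp [hwy]
  · have hzero : ∀ w : {y' : ι // φ y' = z},
        c (w : ι) * (if (w : ι) = y then 1 else 0) = 0 := by
      intro w
      have hwy : (w : ι) ≠ y := by
        intro hh
        exact h (hh ▸ w.2).symm
      simp [hwy]
    rw [tsum_congr hzero]
    simp [h]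

/-- the bounded operator. -/
noncomputable def toOp
    (hc : ∀ z : ι, ∀ F : Finset {y : ι // φ y = z}, ∑ y ∈ F, ‖c (y : ι)‖ ^ 2 ≤ 1) :
    lp (fun _ : ι => ℂ) 2 →L[ℂ] lp (fun _ : ι => ℂ) 2 :=
  LinearMap.mkContinuous
    { toFun := fun f => ⟨gfun φ c hc f, gfun_memℓp φ c hc f⟩
      map_add' := fun f f' => by
        apply Subtype.ext
        funext z
        show gfun φ c hc (f + f') z
          = ((⟨gfun φ c hc f, _⟩ : lp (fun _ : ι => ℂ) 2)
              + (⟨gfun φ c hc f', _⟩ : lp (fun _ : ι => ℂ) 2)) z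
        rw [lp.coeFn_add, gfun_add φ c hc f f' z]
        rfl
      map_smul' := fun r f => by
        apply Subtype.ext
        funext z
        show gfun φ c hc (r • f) z
          = (r • (⟨gfun φ c hc f, _⟩ : lp (fun _ : ι => ℂ) 2)) z
        rw [lp.coeFn_smul, gfun_smul φ c hc r f z]
        rfl }
    1 (fun f => by simpa using gfun_norm_le φ c hc f)

theorem toOp_norm_le
    (hc : ∀ z : ι, ∀ F : Finset {y : ι // φ y = z}, ∑ y ∈ F, ‖c (y : ι)‖ ^ 2 ≤ 1) :
    ‖toOp φ c hc‖ ≤ 1 :=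
  LinearMap.mkContinuous_norm_le _ zero_le_one _

theorem toOp_single
    (hc : ∀ z : ι, ∀ F : Finset {y : ι // φ y = z}, ∑ y ∈ F, ‖c (y : ι)‖ ^ 2 ≤ 1)
    (y : ι) :
    toOp φ c hc (lp.single 2 y (1 : ℂ)) = c y • lp.single 2 (φ y) (1 : ℂ) := by
  apply Subtype.ext
  funext z
  show gfun φ c hc (lp.single 2 y (1 : ℂ)) z
    = (c y • lp.single 2 (φ y) (1 : ℂ) : lp (fun _ : ι => ℂ) 2) z
  rw [gfun_single φ c hc y z, lp.coeFn_smul]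
  by_cases h : z = φ y
  · subst h
    simp [lp.single_apply_self]
  · simp [h, lp.single_apply_ne 2 (φ y) _ h]

end Construction

/-- Auxiliary abstract version. -/
theorem main {ι : Type} [DecidableEq ι] (φ : ι → ι) (c : ι → ℂ) :
    (∃ T : lp (fun _ : ι => ℂ) 2 →L[ℂ] lp (fun _ : ι => ℂ) 2,
      ‖T‖ ≤ 1 ∧
      ∀ y : ι, T (lp.single 2 y (1 : ℂ)) = c y • lp.single 2 (φ y) (1 : ℂ)) ↔
    (∀ z : ι, ∀ F : Finset {y : ι // φ y = z}, ∑ y ∈ F, ‖c (y : ι)‖ ^ 2 ≤ 1) := by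
  constructor
  · rintro ⟨T, hT, hTs⟩ z F
    exact forward φ c T hT hTs z F
  · intro hc
    exact ⟨toOp φ c hc, toOp_norm_le φ c hc, toOp_single φ c hc⟩

end OrbitShiftAux

/-- the prescription `ξ_y ↦ c(y) ξ_{σ_t(y)}` on finitely supported vectors
extends to a bounded operator of norm at most 1 on `ℓ²(S(x))` if and only if
`∑_{σ_t(y') = σ_t(y)} |c(y')|² ≤ 1` for every `y ∈ S(x)`. -/
theorem orbit_shift_bounded_iff
    {S : Type} [AddCancelCommMonoid S] [Countable S] [DecidableEq S]
    {X : Type} [MetricSpace X] [CompactSpace X] [Nonempty X] [DecidableEq X]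
    (σ : S → C(X, X))
    (hσ0 : σ 0 = ContinuousMap.id X)
    (hσadd : ∀ s t : S, σ (s + t) = (σ s).comp (σ t))
    (hσsurj : ∀ s : S, Function.Surjective (σ s))
    (x : X) (t : S)
    -- the action of S on the orbit S(x) = {σ_s(x) : s ∈ S}
    (στ : S → {y : X // ∃ s : S, (σ s) x = y} → {y : X // ∃ s : S, (σ s) x = y})
    (hστ : ∀ (u : S) (y : {y : X // ∃ s : S, (σ s) x = y}), (στ u y : X) = (σ u) (y : X))
    -- an arbitrary coefficient function on the orbit
    (c : {y : X // ∃ s : S, (σ s) x = y} → ℂ) :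
    (∃ T : lp (fun _ : {y : X // ∃ s : S, (σ s) x = y} => ℂ) 2 →L[ℂ]
        lp (fun _ : {y : X // ∃ s : S, (σ s) x = y} => ℂ) 2,
      ‖T‖ ≤ 1 ∧
      ∀ y : {y : X // ∃ s : S, (σ s) x = y},
        T (lp.single 2 y (1 : ℂ)) = c y • lp.single 2 (στ t y) (1 : ℂ)) ↔
    (∀ (y : {y : X // ∃ s : S, (σ s) x = y})
      (F : Finset {y' : {y : X // ∃ s : S, (σ s) x = y} // (σ t) (y' : X) = (σ t) (y : X)}),
      ∑ y' ∈ F, ‖c (y' : {y : X // ∃ s : S, (σ s) x = y})‖ ^ 2 ≤ 1) := by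
  classical
  rw [OrbitShiftAux.main (στ t) c]
  constructor
  · intro h y F
    set e : {y' : {y : X // ∃ s : S, (σ s) x = y} // (σ t) (y' : X) = (σ t) (y : X)} ↪
        {y' : {y : X // ∃ s : S, (σ s) x = y} // στ t y' = στ t y} :=
      Subtype.impEmbedding _ _ (fun y' hy' => Subtype.ext (by rw [hστ, hστ, hy'])) with he
    calc ∑ y' ∈ F, ‖c (y' : {y : X // ∃ s : S, (σ s) x = y})‖ ^ 2
        = ∑ w ∈ F.map e, ‖c (w : {y : X // ∃ s : S, (σ s) x = y})‖ ^ 2 := by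
          rw [Finset.sum_map]; exact Finset.sum_congr rfl fun w _ => rfl
      _ ≤ 1 := h (στ t y) (F.map e)
  · intro h z F
    rcases F.eq_empty_or_nonempty with rfl | ⟨w₀, hw₀⟩
    · simp
    · set e : {y' : {y : X // ∃ s : S, (σ s) x = y} // στ t y' = z} ↪
          {y' : {y : X // ∃ s : S, (σ s) x = y} //
            (σ t) (y' : X) = (σ t) ((w₀ : {y : X // ∃ s : S, (σ s) x = y}) : X)} :=
        Subtype.impEmbedding _ _ (fun y' hy' => by
          have h1 := congrArg Subtype.val (hy'.trans w₀.2.symm)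
          rwa [hστ, hστ] at h1) with he
      calc ∑ y' ∈ F, ‖c (y' : {y : X // ∃ s : S, (σ s) x = y})‖ ^ 2
          = ∑ w ∈ F.map e, ‖c (w : {y : X // ∃ s : S, (σ s) x = y})‖ ^ 2 := by
            rw [Finset.sum_map]; exact Finset.sum_congr rfl fun w _ => rfl
        _ ≤ 1 := h _ (F.map e)
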